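/- Let σ, ρ ∈ (0,1) and 0 < c ≤ C. Suppose x_k ∈ 𝔹 is a sequence with F(x_k) ≠ 0 for all k, B_k : E → E are symmetric positive definite linear maps satisfying c ‖d‖² ≤ ⟪d, B_k d⟫ ≤ C ‖d‖² for all d ∈ E and all k, d_k := −B_k⁻¹ F(x_k), α_k := ρ^{j_k} where j_k is the smallest natural number j such that φ(x_k(ρ^j)) ≤ φ(x_k) − σ ρ^j ⟪F(x_k), B_k⁻¹ F(x_k)⟫ (here x_k(α) := (x_k + α d_k)/‖x_k + α d_k‖; such j_k exists), and x_{k+1} := x_k(α_k). Then every accumulation point x̄ of the sequence {x_k} satisfies F(x̄) = 0, i.e. x̄ is a Z-eigenvector of A corresponding to the eigenvalue λ̄ = A x̄^m. -/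

import Mathlib

open scoped RealInnerProductSpace

noncomputable section

/-- Euclidean space `ℝ^n`. -/
abbrev Euc (n : ℕ) : Type := EuclideanSpace ℝ (Fin n)

/-- An `m`-th order tensor on `ℝ^n`, viewed as a continuous `m`-multilinear form. -/
abbrev Tensor (m n : ℕ) : Type := ContinuousMultilinearMap ℝ (fun _ : Fin m => Euc n) ℝ

/-- A tensor is symmetric if it is invariant under every permutation of its arguments. -/
def IsSymmTensor {m n : ℕ} (A : Tensor m n) : Prop :=
  ∀ (e : Equiv.Perm (Fin m)) (v : Fin m → Euc n), A (v ∘ e) = A v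

/-- `A x^m`, the homogeneous form `A (x, …, x)`. -/
def tpow {m n : ℕ} (A : Tensor m n) (x : Euc n) : ℝ := A (fun _ => x)

/-- The last index of `Fin m`. -/
def lastIdx {m : ℕ} (_hm : 2 ≤ m) : Fin m := ⟨m - 1, by omega⟩

/-- The second to last index of `Fin m`. -/
def sndIdx {m : ℕ} (_hm : 2 ≤ m) : Fin m := ⟨m - 2, by omega⟩

lemma sndIdx_ne_lastIdx {m : ℕ} (hm : 2 ≤ m) : sndIdx hm ≠ lastIdx hm := by
  simp only [sndIdx, lastIdx, Fin.mk.injEq, ne_eq]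
  omega

/-- `A x^{m-1}`: the unique vector with `⟪A x^{m-1}, v⟫ = A (x, …, x, v)` for all `v`. -/
def tvec {m n : ℕ} (A : Tensor m n) (hm : 2 ≤ m) (x : Euc n) : Euc n :=
  (InnerProductSpace.toDual ℝ (Euc n)).symm
    (A.toContinuousLinearMap (fun _ => x) (lastIdx hm))

/-- `F(x) = A x^{m-1} - (A x^m) • x`. -/
def Fvec {m n : ℕ} (A : Tensor m n) (hm : 2 ≤ m) (x : Euc n) : Euc n :=
  tvec A hm x - tpow A x • x

/-- `φ(x) = (1/m) A x^m`. -/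
def phi {m n : ℕ} (A : Tensor m n) (x : Euc n) : ℝ := (1 / (m : ℝ)) * tpow A x

/-- Orthogonal projection `P_x d = d - ⟪x, d⟫ x` (for `x` a unit vector). -/
def Pproj {n : ℕ} (x d : Euc n) : Euc n := d - ⟪x, d⟫ • x

/-- `x(α) = (x + α d)/‖x + α d‖`, the projection of `x + α d` onto the unit sphere. -/
def xcur {n : ℕ} (x d : Euc n) (α : ℝ) : Euc n := ‖x + α • d‖⁻¹ • (x + α • d)

/-- `w(x, d)`: the unique vector with `⟪w(x, d), v⟫ = A (x, …, x, d, v)` for all `v`. -/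
def wvec {m n : ℕ} (A : Tensor m n) (hm : 2 ≤ m) (x d : Euc n) : Euc n :=
  (InnerProductSpace.toDual ℝ (Euc n)).symm
    (A.toContinuousLinearMap (Function.update (fun _ => x) (sndIdx hm) d) (lastIdx hm))

/-- `A (x, …, x, d, d)`. -/
def A2 {m n : ℕ} (A : Tensor m n) (hm : 2 ≤ m) (x d : Euc n) : ℝ :=
  A (Function.update (Function.update (fun _ => x) (sndIdx hm) d) (lastIdx hm) d)

lemma wvec_add {m n : ℕ} (A : Tensor m n) (hm : 2 ≤ m) (x d₁ d₂ : Euc n) :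
    wvec A hm x (d₁ + d₂) = wvec A hm x d₁ + wvec A hm x d₂ := by
  unfold wvec
  rw [← map_add]
  congr 1
  ext v
  simp only [ContinuousMultilinearMap.toContinuousLinearMap_apply, ContinuousLinearMap.add_apply]
  rw [Function.update_comm (sndIdx_ne_lastIdx hm), Function.update_comm (sndIdx_ne_lastIdx hm),
    Function.update_comm (sndIdx_ne_lastIdx hm)]
  exact A.map_update_add _ _ _ _

lemma wvec_smul {m n : ℕ} (A : Tensor m n) (hm : 2 ≤ m) (x : Euc n) (c : ℝ) (d : Euc n) :
    wvec A hm x (c • d) = c • wvec A hm x d := by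
  unfold wvec
  rw [← map_smul]
  congr 1
  ext v
  simp only [ContinuousMultilinearMap.toContinuousLinearMap_apply,
    ContinuousLinearMap.smul_apply, smul_eq_mul]
  rw [Function.update_comm (sndIdx_ne_lastIdx hm), Function.update_comm (sndIdx_ne_lastIdx hm)]
  exact A.map_update_smul _ _ _ _

/-- The Jacobian `F'(x) d = (m-1) w(x,d) - (A x^m) d - m ⟪A x^{m-1}, d⟫ x`. -/
def FderivL {m n : ℕ} (A : Tensor m n) (hm : 2 ≤ m) (x : Euc n) : Euc n →L[ℝ] Euc n :=
  LinearMap.toContinuousLinearMap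
  { toFun := fun d =>
      ((m : ℝ) - 1) • wvec A hm x d - tpow A x • d - ((m : ℝ) * ⟪tvec A hm x, d⟫) • x
    map_add' := by
      intro d₁ d₂
      try simp only
      rw [wvec_add, inner_add_right]
      module
    map_smul' := by
      intro c d
      simp only [RingHom.id_apply]
      rw [wvec_smul, inner_smul_right]
      module }

/-- A Newton direction at `x`: `⟪x, d⟫ = 0` and `P_x (F'(x) d + F(x)) = 0`. -/
def NewtonDir {m n : ℕ} (A : Tensor m n) (hm : 2 ≤ m) (x d : Euc n) : Prop :=
  ⟪x, d⟫ = 0 ∧ Pproj x (FderivL A hm x d + Fvec A hm x) = 0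

/-- The residual function `θ(x) = (1/2)‖F(x)‖²`. -/
def theta {m n : ℕ} (A : Tensor m n) (hm : 2 ≤ m) (x : Euc n) : ℝ :=
  (1 / 2) * ‖Fvec A hm x‖ ^ 2

/-- Assumption (A): second-order sufficient condition at the KKT point `x̄`. -/
def AssumpA {m n : ℕ} (A : Tensor m n) (hm : 2 ≤ m) (xb : Euc n) (lam : ℝ) : Prop :=
  ‖xb‖ = 1 ∧ tvec A hm xb = lam • xb ∧ lam = tpow A xb ∧
    ∀ d : Euc n, d ≠ 0 → ⟪xb, d⟫ = 0 →
      0 < ((m : ℝ) - 1) * A2 A hm xb d - lam * ‖d‖ ^ 2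

end

noncomputable section
open scoped RealInnerProductSpace
open Filter Set

variable {m n : ℕ}

lemma inner_tvec (A : Tensor m n) (hm : 2 ≤ m) (x v : Euc n) :
    ⟪tvec A hm x, v⟫ = A (Function.update (fun _ => x) (lastIdx hm) v) := by
  rw [tvec, InnerProductSpace.toDual_symm_apply,
    ContinuousMultilinearMap.toContinuousLinearMap_apply]

lemma inner_tvec_self (A : Tensor m n) (hm : 2 ≤ m) (x : Euc n) :
    ⟪tvec A hm x, x⟫ = tpow A x := by
  rw [inner_tvec]
  congr 1
  exact Function.update_eq_self _ _

lemma update_symm (A : Tensor m n) (hA : IsSymmTensor A) (hm : 2 ≤ m) (x v : Euc n)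
    (i : Fin m) : A (Function.update (fun _ => x) i v) = ⟪tvec A hm x, v⟫ := by
  rw [inner_tvec]
  have h2 : (Function.update (fun _ => x) (lastIdx hm) v) ∘ (Equiv.swap i (lastIdx hm)) =
      Function.update (fun _ => x) i v := by
    rw [Function.update_comp_equiv]
    simp [Equiv.symm_swap, Equiv.swap_apply_right, Function.comp_def]
  rw [← hA (Equiv.swap i (lastIdx hm)) (Function.update (fun _ => x) (lastIdx hm) v), h2]

lemma sum_update (A : Tensor m n) (hA : IsSymmTensor A) (hm : 2 ≤ m) (x v : Euc n) :
    ∑ i : Fin m, A (Function.update (fun _ => x) i v) = m * ⟪tvec A hm x, v⟫ := by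
  simp [update_symm A hA hm x v, Finset.sum_const, Finset.card_univ]

lemma continuous_tpow (A : Tensor m n) : Continuous (tpow A) :=
  A.cont.comp (continuous_pi fun _ => continuous_id)

lemma continuous_tvec (A : Tensor m n) (hm : 2 ≤ m) : Continuous (tvec A hm) := by
  have key : ∀ x, tvec A hm x = ∑ i : Fin n,
      A (Function.update (fun _ => x) (lastIdx hm) (EuclideanSpace.basisFun (Fin n) ℝ i)) •
        EuclideanSpace.basisFun (Fin n) ℝ i := by
    intro x
    conv_lhs => rw [← (EuclideanSpace.basisFun (Fin n) ℝ).sum_repr' (tvec A hm x)]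
    congr 1; ext i
    rw [real_inner_comm, inner_tvec]
  rw [show tvec A hm = _ from funext key]
  refine continuous_finset_sum _ fun i _ => Continuous.fun_smul ?_ continuous_const
  exact A.cont.comp ((continuous_pi fun _ => continuous_id).update _ continuous_const)

lemma continuous_Fvec (A : Tensor m n) (hm : 2 ≤ m) : Continuous (Fvec A hm) :=
  (continuous_tvec A hm).sub ((continuous_tpow A).smul continuous_id)


/-- The derivative of `t ↦ φ(x(t))`. -/
def Hfun (A : Tensor m n) (hm : 2 ≤ m) (x d : Euc n) (t : ℝ) : ℝ :=
  ⟪tvec A hm (x + t • d), d⟫ * (⟪x + t • d, x + t • d⟫ : ℝ) ^ (-(m : ℝ)/2)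
    - tpow A (x + t • d) * ⟪x + t • d, d⟫ *
      (⟪x + t • d, x + t • d⟫ : ℝ) ^ (-(m : ℝ)/2 - 1)

lemma tpow_smul (A : Tensor m n) (c : ℝ) (y : Euc n) :
    tpow A (c • y) = c ^ m * tpow A y := by
  have := A.map_smul_univ (fun _ : Fin m => c) (fun _ => y)
  simpa [tpow, smul_eq_mul] using this

lemma phi_xcur_eq (A : Tensor m n) (hm : 2 ≤ m) (x d : Euc n) (t : ℝ)
    (hy : x + t • d ≠ 0) :
    phi A (xcur x d t) =
      (1 / (m : ℝ)) * (tpow A (x + t • d) *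
        (⟪x + t • d, x + t • d⟫ : ℝ) ^ (-(m : ℝ)/2)) := by
  set y := x + t • d
  have hN : (0:ℝ) < ‖y‖ := norm_pos_iff.mpr hy
  have h1 : (⟪y, y⟫ : ℝ) ^ (-(m : ℝ)/2) = (‖y‖ ^ m)⁻¹ := by
    rw [real_inner_self_eq_norm_sq, ← Real.rpow_natCast ‖y‖ 2, ← Real.rpow_natCast ‖y‖ m,
      ← Real.rpow_mul hN.le, ← Real.rpow_neg hN.le]
    norm_num
    ring_nf
    rw [Real.rpow_neg hN.le, Real.rpow_natCast, inv_pow]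
  rw [phi, xcur, tpow_smul, h1, inv_pow]
  ring

lemma hasDerivAt_phi_xcur (A : Tensor m n) (hA : IsSymmTensor A) (hm : 2 ≤ m)
    (x d : Euc n) (t : ℝ) (hy : x + t • d ≠ 0) :
    HasDerivAt (fun τ => phi A (xcur x d τ)) (Hfun A hm x d t) t := by
  have hm0 : (m : ℝ) ≠ 0 := by positivity
  have hcurve : HasDerivAt (fun τ : ℝ => x + τ • d) d t := by
    simpa using ((hasDerivAt_id t).smul_const d).const_add x
  have hs : HasDerivAt (fun τ : ℝ => (⟪x + τ • d, x + τ • d⟫ : ℝ))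
      (⟪x + t • d, d⟫ + ⟪d, x + t • d⟫) t := HasDerivAt.inner ℝ hcurve hcurve
  have hq : HasDerivAt (fun τ : ℝ => tpow A (x + τ • d))
      ((m : ℝ) * ⟪tvec A hm (x + t • d), d⟫) t := by
    have hpi : HasDerivAt (fun τ : ℝ => (fun _ : Fin m => x + τ • d))
        (fun _ : Fin m => d) t := hasDerivAt_pi.mpr fun _ => hcurve
    have := (A.hasFDerivAt (fun _ : Fin m => x + t • d)).comp_hasDerivAt t hpi
    rw [ContinuousMultilinearMap.linearDeriv_apply] at this
    simpa [tpow, sum_update A hA hm, Function.comp_def] using this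
  have hspos : (0:ℝ) < (⟪x + t • d, x + t • d⟫ : ℝ) := by
    have hN : (0:ℝ) < ‖x + t • d‖ := norm_pos_iff.mpr hy
    rw [real_inner_self_eq_norm_sq]; exact pow_pos hN 2
  have hG : HasDerivAt (fun τ : ℝ => (1 / (m : ℝ)) * (tpow A (x + τ • d) *
      (⟪x + τ • d, x + τ • d⟫ : ℝ) ^ (-(m : ℝ)/2))) (Hfun A hm x d t) t := by
    have hr : HasDerivAt (fun τ : ℝ => (⟪x + τ • d, x + τ • d⟫ : ℝ) ^ (-(m : ℝ)/2))
        ((⟪x + t • d, d⟫ + ⟪d, x + t • d⟫) * (-(m : ℝ)/2) *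
          (⟪x + t • d, x + t • d⟫ : ℝ) ^ (-(m : ℝ)/2 - 1)) t :=
      hs.rpow_const (Or.inl hspos.ne')
    have hder := ((hq.fun_mul hr).const_mul (1 / (m : ℝ)))
    refine hder.congr_deriv ?_
    have hsplit : (⟪x + t • d, x + t • d⟫ : ℝ) ^ (-(m : ℝ)/2) =
        (⟪x + t • d, x + t • d⟫ : ℝ) ^ (-(m : ℝ)/2 - 1) * ⟪x + t • d, x + t • d⟫ := by
      rw [show (-(m:ℝ)/2) = (-(m:ℝ)/2 - 1) + 1 by ring, Real.rpow_add_one hspos.ne']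
      norm_num
    rw [Hfun, real_inner_comm d (x + t • d), hsplit]
    set P := (⟪x + t • d, x + t • d⟫ : ℝ) ^ (-(m : ℝ)/2 - 1) with hP
    set S := (⟪x + t • d, x + t • d⟫ : ℝ) with hS
    set a := (⟪tvec A hm (x + t • d), d⟫ : ℝ) with ha
    set b := (⟪x + t • d, d⟫ : ℝ) with hb
    set q := tpow A (x + t • d) with hq2
    field_simp
    ring
  refine hG.congr_of_eventuallyEq ?_
  have hopen : ∀ᶠ τ in nhds t, x + τ • d ≠ 0 := by
    have hc : Continuous fun τ : ℝ => x + τ • d := by continuity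
    exact hc.continuousAt.eventually_ne hy
  filter_upwards [hopen] with τ hτ
  exact phi_xcur_eq A hm x d τ hτ


lemma tendsto_Hfun (A : Tensor m n) (hm : 2 ≤ m) (xs ds : ℕ → Euc n) (ts : ℕ → ℝ)
    (xb db : Euc n) (hxb : ‖xb‖ = 1)
    (hx : Tendsto xs atTop (nhds xb)) (hd : Tendsto ds atTop (nhds db))
    (ht : Tendsto ts atTop (nhds 0)) :
    Tendsto (fun i => Hfun A hm (xs i) (ds i) (ts i)) atTop
      (nhds (⟪Fvec A hm xb, db⟫)) := by
  have hy : Tendsto (fun i => xs i + ts i • ds i) atTop (nhds xb) := by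
    have := hx.add (ht.smul hd)
    simpa using this
  have hs1 : Tendsto (fun i => (⟪xs i + ts i • ds i, xs i + ts i • ds i⟫ : ℝ)) atTop
      (nhds 1) := by
    have h1 : (⟪xb, xb⟫ : ℝ) = 1 := by
      rw [real_inner_self_eq_norm_sq, hxb]; norm_num
    have := hy.inner (𝕜 := ℝ) hy
    rwa [h1] at this
  have hrp : ∀ p : ℝ, Tendsto (fun i =>
      (⟪xs i + ts i • ds i, xs i + ts i • ds i⟫ : ℝ) ^ p) atTop (nhds 1) := by
    intro p
    have hc := (Real.continuousAt_rpow_const 1 p (Or.inl one_ne_zero)).tendsto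
    have := hc.comp hs1
    simpa [Real.one_rpow, Function.comp_def] using this
  have htv : Tendsto (fun i => (⟪tvec A hm (xs i + ts i • ds i), ds i⟫ : ℝ)) atTop
      (nhds ⟪tvec A hm xb, db⟫) :=
    (((continuous_tvec A hm).tendsto xb).comp hy).inner (𝕜 := ℝ) hd
  have htp : Tendsto (fun i => tpow A (xs i + ts i • ds i)) atTop (nhds (tpow A xb)) :=
    ((continuous_tpow A).tendsto xb).comp hy
  have hyd : Tendsto (fun i => (⟪xs i + ts i • ds i, ds i⟫ : ℝ)) atTop
      (nhds ⟪xb, db⟫) := hy.inner (𝕜 := ℝ) hd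
  have hfinal := (htv.mul (hrp (-(m:ℝ)/2))).sub
    ((htp.mul hyd).mul (hrp (-(m:ℝ)/2 - 1)))
  have hval : (⟪Fvec A hm xb, db⟫ : ℝ) =
      ⟪tvec A hm xb, db⟫ * 1 - tpow A xb * ⟪xb, db⟫ * 1 := by
    rw [Fvec, inner_sub_left, real_inner_smul_left]; ring
  rw [hval]
  exact hfinal

lemma bform_cs (B : Euc n →L[ℝ] Euc n) (hsym : ∀ u v : Euc n, ⟪B u, v⟫ = ⟪u, B v⟫)
    (hpos : ∀ v : Euc n, 0 ≤ ⟪v, B v⟫) (u v : Euc n) :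
    (⟪u, B v⟫ : ℝ) ^ 2 ≤ ⟪u, B u⟫ * ⟪v, B v⟫ := by
  have key : ∀ t : ℝ, 0 ≤ (⟪v, B v⟫ : ℝ) * (t * t) + (2 * ⟪u, B v⟫) * t + ⟪u, B u⟫ := by
    intro t
    have h0 := hpos (u + t • v)
    have hexp : (⟪u + t • v, B (u + t • v)⟫ : ℝ) =
        ⟪v, B v⟫ * (t * t) + (2 * ⟪u, B v⟫) * t + ⟪u, B u⟫ := by
      rw [map_add, map_smul]
      simp only [inner_add_left, inner_add_right, real_inner_smul_left, real_inner_smul_right]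
      have h1 : (⟪v, B u⟫ : ℝ) = ⟪u, B v⟫ := by rw [real_inner_comm, hsym]
      rw [h1]; ring
    rwa [hexp] at h0
  have hd := discrim_le_zero key
  rw [discrim] at hd
  nlinarith [hd]


lemma key_aux (hm : 2 ≤ m) (A : Tensor m n) (hA : IsSymmTensor A)
    (σ ρ : ℝ) (hσ : σ ∈ Set.Ioo (0:ℝ) 1) (hρ : ρ ∈ Set.Ioo (0:ℝ) 1)
    (c C : ℝ) (hc : 0 < c) (hC0 : 0 < C)
    (x : ℕ → Euc n) (hxS : ∀ k, ‖x k‖ = 1)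
    (dd : ℕ → Euc n) (g : ℕ → ℝ)
    (hgd : ∀ k, g k = -⟪Fvec A hm (x k), dd k⟫)
    (hgpos : ∀ k, 0 < g k)
    (hgC : ∀ k, ‖Fvec A hm (x k)‖^2 ≤ C * g k)
    (hdb : ∀ k, ‖dd k‖ ≤ ‖Fvec A hm (x k)‖ / c)
    (j : ℕ → ℕ)
    (hj : ∀ k, phi A (xcur (x k) (dd k) (ρ ^ j k)) ≤ phi A (x k) - σ * ρ ^ j k * g k)
    (hjmin : ∀ k, ∀ i < j k, ¬ (phi A (xcur (x k) (dd k) (ρ ^ i)) ≤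
        phi A (x k) - σ * ρ ^ i * g k))
    (hstep : ∀ k, x (k+1) = xcur (x k) (dd k) (ρ ^ j k))
    (xb : Euc n) (s : ℕ → ℕ) (hsm : StrictMono s)
    (hxs : Filter.Tendsto (fun i => x (s i)) Filter.atTop (nhds xb)) :
    Fvec A hm xb = 0 := by
  classical
  by_contra hF0
  have hαpos : ∀ k, (0:ℝ) < ρ ^ j k := fun k => pow_pos hρ.1 _
  have hdec : ∀ k, phi A (x (k+1)) ≤ phi A (x k) - σ * ρ ^ j k * g k := by
    intro k; rw [hstep k]; exact hj k
  have hmono : Antitone fun k => phi A (x k) := by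
    apply antitone_nat_of_succ_le
    intro k
    have h1 := hdec k
    have h2 : 0 < σ * ρ ^ j k * g k := mul_pos (mul_pos hσ.1 (hαpos k)) (hgpos k)
    linarith
  have hm0 : (0:ℝ) < (m:ℝ) := by exact_mod_cast Nat.lt_of_lt_of_le Nat.zero_lt_two hm
  have hlow : ∀ k, -((1/(m:ℝ)) * ‖A‖) ≤ phi A (x k) := by
    intro k
    have h1 : |tpow A (x k)| ≤ ‖A‖ := by
      have h2 := A.le_opNorm (fun _ => x k)
      simp only [hxS k, Finset.prod_const_one, mul_one, Real.norm_eq_abs] at h2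
      exact h2
    have h3 := (abs_le.mp h1).1
    rw [phi]
    have h4 : (0:ℝ) < 1/(m:ℝ) := by positivity
    nlinarith
  have hbdd : BddBelow (Set.range fun k => phi A (x k)) :=
    ⟨-((1/(m:ℝ)) * ‖A‖), by rintro y ⟨k, rfl⟩; exact hlow k⟩
  have hconv := tendsto_atTop_ciInf hmono hbdd
  have hconv1 : Tendsto (fun k => phi A (x (k+1))) atTop (nhds (⨅ i, phi A (x i))) :=
    hconv.comp (tendsto_add_atTop_nat 1)
  have hdiff : Tendsto (fun k => phi A (x k) - phi A (x (k+1))) atTop (nhds 0) := by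
    have := hconv.sub hconv1; simpa using this
  have h_ag : Tendsto (fun k => ρ ^ j k * g k) atTop (nhds 0) := by
    have hup : ∀ k, ρ ^ j k * g k ≤ (phi A (x k) - phi A (x (k+1))) / σ := by
      intro k
      rw [le_div_iff₀ hσ.1]
      have := hdec k; nlinarith
    have hdiv : Tendsto (fun k => (phi A (x k) - phi A (x (k+1))) / σ) atTop (nhds 0) := by
      simpa using hdiff.div_const σ
    exact squeeze_zero (fun k => (mul_pos (hαpos k) (hgpos k)).le) hup hdiv
  -- along the subsequence
  have hxb1 : ‖xb‖ = 1 := by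
    have h1 : Tendsto (fun i => ‖x (s i)‖) atTop (nhds ‖xb‖) := hxs.norm
    have h2 : (fun i => ‖x (s i)‖) = fun _ => (1:ℝ) := funext fun i => hxS (s i)
    rw [h2] at h1
    exact (tendsto_nhds_unique tendsto_const_nhds h1).symm
  have hFs : Tendsto (fun i => Fvec A hm (x (s i))) atTop (nhds (Fvec A hm xb)) :=
    ((continuous_Fvec A hm).tendsto xb).comp hxs
  set ε := ‖Fvec A hm xb‖^2 / (2*C) with hε
  have hFn : 0 < ‖Fvec A hm xb‖ := norm_pos_iff.mpr hF0
  have hεpos : 0 < ε := by positivity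
  have hq2 : Tendsto (fun i => ‖Fvec A hm (x (s i))‖^2 / C) atTop
      (nhds (‖Fvec A hm xb‖^2 / C)) := (hFs.norm.pow 2).div_const C
  have hglb : ∀ᶠ i in atTop, ε ≤ g (s i) := by
    have hlt : ε < ‖Fvec A hm xb‖^2 / C :=
      div_lt_div_of_pos_left (by positivity) hC0 (by linarith)
    filter_upwards [hq2.eventually_const_lt hlt] with i hi
    have h5 := hgC (s i)
    have h6 : ‖Fvec A hm (x (s i))‖^2 / C ≤ g (s i) := by
      rw [div_le_iff₀ hC0]; linarith
    linarith
  have hαg_s : Tendsto (fun i => ρ ^ j (s i) * g (s i)) atTop (nhds 0) :=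
    h_ag.comp hsm.tendsto_atTop
  have hα0 : Tendsto (fun i => ρ ^ j (s i)) atTop (nhds 0) := by
    refine squeeze_zero' (g := fun i => ρ ^ j (s i) * g (s i) * ε⁻¹)
      (Eventually.of_forall fun i => (hαpos (s i)).le) ?_ ?_
    · filter_upwards [hglb] with i hi
      have h7 : ρ ^ j (s i) * ε ≤ ρ ^ j (s i) * g (s i) :=
        mul_le_mul_of_nonneg_left hi (hαpos _).le
      calc ρ ^ j (s i) = ρ ^ j (s i) * ε * ε⁻¹ := by field_simp
        _ ≤ ρ ^ j (s i) * g (s i) * ε⁻¹ :=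
          mul_le_mul_of_nonneg_right h7 (inv_nonneg.2 hεpos.le)
    · simpa using hαg_s.mul_const ε⁻¹
  have hj1 : ∀ᶠ i in atTop, 1 ≤ j (s i) := by
    filter_upwards [hα0.eventually_lt_const one_pos] with i hi
    by_contra h
    push_neg at h
    rw [Nat.lt_one_iff.mp h] at hi
    simp at hi
  set βs : ℕ → ℝ := fun i => ρ ^ (j (s i) - 1) with hβs
  have hβpos : ∀ i, 0 < βs i := fun i => pow_pos hρ.1 _
  have hβeq : ∀ᶠ i in atTop, βs i = ρ ^ j (s i) / ρ := by
    filter_upwards [hj1] with i hi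
    rw [eq_div_iff (ne_of_gt hρ.1), hβs, ← pow_succ]
    congr 1; omega
  have hβ0 : Tendsto βs atTop (nhds 0) := by
    have h1 : Tendsto (fun i => ρ ^ j (s i) / ρ) atTop (nhds 0) := by
      simpa using hα0.div_const ρ
    have h2 : (fun i => ρ ^ j (s i) / ρ) =ᶠ[atTop] βs := by
      filter_upwards [hβeq] with i hi; exact hi.symm
    exact h1.congr' h2
  have hfail : ∀ᶠ i in atTop, phi A (x (s i)) - σ * βs i * g (s i) <
      phi A (xcur (x (s i)) (dd (s i)) (βs i)) := by
    filter_upwards [hj1] with i hi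
    have h8 := hjmin (s i) (j (s i) - 1) (by omega)
    push_neg at h8
    exact h8
  -- bound on dd along s, extract convergent subsequence
  obtain ⟨R, hR⟩ : BddAbove (Set.range fun i => ‖Fvec A hm (x (s i))‖ / c) :=
    (hFs.norm.div_const c).bddAbove_range
  have hdR : ∀ i, ‖dd (s i)‖ ≤ R := fun i => (hdb (s i)).trans (hR ⟨i, rfl⟩)
  obtain ⟨db, -, t, htm, hdt⟩ := tendsto_subseq_of_bounded
    (Metric.isBounded_closedBall (x := (0 : Euc n)) (r := R))
    (fun i => mem_closedBall_zero_iff.mpr (hdR i))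
  have hx' : Tendsto (fun i => x (s (t i))) atTop (nhds xb) := hxs.comp htm.tendsto_atTop
  have hd' : Tendsto (fun i => dd (s (t i))) atTop (nhds db) := hdt
  have hβ' : Tendsto (fun i => βs (t i)) atTop (nhds 0) := hβ0.comp htm.tendsto_atTop
  have hβR : ∀ᶠ i in atTop, βs (t i) * R < 1 := by
    have h9 : Tendsto (fun i => βs (t i) * R) atTop (nhds 0) := by
      simpa using hβ'.mul_const R
    exact h9.eventually_lt_const one_pos
  obtain ⟨N, hN⟩ := eventually_atTop.mp ((htm.tendsto_atTop.eventually hfail).and hβR)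
  -- MVT
  have hMVT : ∀ i, N ≤ i → ∃ ξ, ξ ∈ Ioo 0 (βs (t i)) ∧
      -(σ * g (s (t i))) < Hfun A hm (x (s (t i))) (dd (s (t i))) ξ := by
    intro i hi
    obtain ⟨hfaili, hβRi⟩ := hN i hi
    have hb := hβpos (t i)
    have hne : ∀ τ ∈ Icc (0:ℝ) (βs (t i)), x (s (t i)) + τ • dd (s (t i)) ≠ 0 := by
      rintro τ ⟨hτ0, hτb⟩ h0
      have h10 : x (s (t i)) = -(τ • dd (s (t i))) := eq_neg_of_add_eq_zero_left h0
      have h11 : (1:ℝ) = τ * ‖dd (s (t i))‖ := by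
        rw [← hxS (s (t i)), h10, norm_neg, norm_smul, Real.norm_eq_abs, abs_of_nonneg hτ0]
      have h12 := hdR (t i)
      have h13 : (0:ℝ) ≤ ‖dd (s (t i))‖ := norm_nonneg _
      nlinarith
    have hcont : ContinuousOn (fun τ => phi A (xcur (x (s (t i))) (dd (s (t i))) τ))
        (Icc 0 (βs (t i))) := fun τ hτ =>
      (hasDerivAt_phi_xcur A hA hm _ _ τ (hne τ hτ)).continuousAt.continuousWithinAt
    obtain ⟨ξ, hξIoo, hslope⟩ := exists_hasDerivAt_eq_slope
      (fun τ => phi A (xcur (x (s (t i))) (dd (s (t i))) τ))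
      (fun τ => Hfun A hm (x (s (t i))) (dd (s (t i))) τ) hb hcont
      (fun τ hτ => hasDerivAt_phi_xcur A hA hm _ _ τ (hne τ (Ioo_subset_Icc_self hτ)))
    refine ⟨ξ, hξIoo, ?_⟩
    have hX0 : xcur (x (s (t i))) (dd (s (t i))) 0 = x (s (t i)) := by
      rw [xcur]
      simp [hxS (s (t i))]
    rw [hslope, hX0, sub_zero, lt_div_iff₀ hb]
    nlinarith [hfaili]
  set ξfun : ℕ → ℝ := fun i => if h : N ≤ i then (hMVT i h).choose else βs (t i)/2
    with hξfun
  have hξmem : ∀ i, ξfun i ∈ Ioo 0 (βs (t i)) := by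
    intro i
    by_cases h : N ≤ i
    · simp only [hξfun, dif_pos h]; exact (hMVT i h).choose_spec.1
    · simp only [hξfun, dif_neg h]
      exact ⟨half_pos (hβpos (t i)), half_lt_self (hβpos (t i))⟩
  have hξineq : ∀ i, N ≤ i → -(σ * g (s (t i))) <
      Hfun A hm (x (s (t i))) (dd (s (t i))) (ξfun i) := by
    intro i h
    simp only [hξfun, dif_pos h]
    exact (hMVT i h).choose_spec.2
  have hξ0 : Tendsto ξfun atTop (nhds 0) :=
    squeeze_zero (fun i => (hξmem i).1.le) (fun i => (hξmem i).2.le) hβ'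
  have hH := tendsto_Hfun A hm (fun i => x (s (t i))) (fun i => dd (s (t i))) ξfun
    xb db hxb1 hx' hd' hξ0
  have hg' : Tendsto (fun i => g (s (t i))) atTop (nhds (-⟪Fvec A hm xb, db⟫)) := by
    have h14 : (fun i => g (s (t i))) =
        fun i => -⟪Fvec A hm (x (s (t i))), dd (s (t i))⟫ := funext fun i => hgd _
    rw [h14]
    exact (((hFs.comp htm.tendsto_atTop).inner (𝕜 := ℝ) hdt).neg)
  have hεbar : ε ≤ -⟪Fvec A hm xb, db⟫ :=
    le_of_tendsto_of_tendsto tendsto_const_nhds hg'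
      (htm.tendsto_atTop.eventually hglb)
  have hlim : -(σ * -⟪Fvec A hm xb, db⟫) ≤ ⟪Fvec A hm xb, db⟫ :=
    le_of_tendsto_of_tendsto (hg'.const_mul σ).neg hH
      (eventually_atTop.mpr ⟨N, fun i h => (hξineq i h).le⟩)
  nlinarith [hσ.1, hσ.2, hεpos, hεbar, hlim]


end

/-- global convergence of the general feasible descent method: every accumulation
point of the iterates is a `Z`-eigenvector of `A` with eigenvalue `A x̄^m`. -/
theorem stmt4 {m n : ℕ} (hn : 1 ≤ n) (hm : 2 ≤ m) (A : Tensor m n) (hA : IsSymmTensor A)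
    (σ ρ : ℝ) (hσ : σ ∈ Set.Ioo (0 : ℝ) 1) (hρ : ρ ∈ Set.Ioo (0 : ℝ) 1)
    (c C : ℝ) (hc : 0 < c) (hcC : c ≤ C)
    (x : ℕ → Euc n) (hxS : ∀ k, ‖x k‖ = 1) (hFk : ∀ k, Fvec A hm (x k) ≠ 0)
    (B Binv : ℕ → Euc n →L[ℝ] Euc n)
    (hBsa : ∀ k, IsSelfAdjoint (B k))
    (hBlow : ∀ k (v : Euc n), c * ‖v‖ ^ 2 ≤ ⟪v, B k v⟫)
    (hBup : ∀ k (v : Euc n), ⟪v, B k v⟫ ≤ C * ‖v‖ ^ 2)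
    (hBinv : ∀ k v, B k (Binv k v) = v) (hBinv' : ∀ k v, Binv k (B k v) = v)
    (d : ℕ → Euc n) (hd : ∀ k, d k = -(Binv k (Fvec A hm (x k))))
    (j : ℕ → ℕ)
    (hj : ∀ k, phi A (xcur (x k) (d k) (ρ ^ j k)) ≤
        phi A (x k) - σ * ρ ^ j k * ⟪Fvec A hm (x k), Binv k (Fvec A hm (x k))⟫)
    (hjmin : ∀ k, ∀ i < j k, ¬ (phi A (xcur (x k) (d k) (ρ ^ i)) ≤
        phi A (x k) - σ * ρ ^ i * ⟪Fvec A hm (x k), Binv k (Fvec A hm (x k))⟫))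
    (hstep : ∀ k, x (k + 1) = xcur (x k) (d k) (ρ ^ j k)) :
    ∀ xb : Euc n,
      (∃ s : ℕ → ℕ, StrictMono s ∧
        Filter.Tendsto (fun i => x (s i)) Filter.atTop (nhds xb)) →
      Fvec A hm xb = 0 ∧ tvec A hm xb = tpow A xb • xb := by
  rintro xb ⟨s, hsm, hxs⟩
  have hC0 : (0:ℝ) < C := lt_of_lt_of_le hc hcC
  have hsymk : ∀ k (u v : Euc n), ⟪B k u, v⟫ = ⟪u, B k v⟫ := fun k =>
    ContinuousLinearMap.isSelfAdjoint_iff_isSymmetric.mp (hBsa k)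
  have hBpos : ∀ k (v : Euc n), 0 ≤ ⟪v, B k v⟫ := fun k v =>
    le_trans (by positivity) (hBlow k v)
  have hgd : ∀ k, (⟪Fvec A hm (x k), Binv k (Fvec A hm (x k))⟫ : ℝ) =
      -⟪Fvec A hm (x k), d k⟫ := by
    intro k; rw [hd k, inner_neg_right, neg_neg]
  have hgpos : ∀ k, (0:ℝ) < ⟪Fvec A hm (x k), Binv k (Fvec A hm (x k))⟫ := by
    intro k
    have hw0 : Binv k (Fvec A hm (x k)) ≠ 0 := by
      intro h
      apply hFk k
      have h2 := hBinv k (Fvec A hm (x k))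
      rw [h, map_zero] at h2
      exact h2.symm
    have h1 : (⟪Binv k (Fvec A hm (x k)), B k (Binv k (Fvec A hm (x k)))⟫ : ℝ) =
        ⟪Fvec A hm (x k), Binv k (Fvec A hm (x k))⟫ := by
      rw [hBinv k]
      exact real_inner_comm _ _
    rw [← h1]
    have hwp : 0 < ‖Binv k (Fvec A hm (x k))‖ := norm_pos_iff.mpr hw0
    calc (0:ℝ) < c * ‖Binv k (Fvec A hm (x k))‖ ^ 2 := mul_pos hc (pow_pos hwp 2)
      _ ≤ _ := hBlow k _
  have hgC : ∀ k, ‖Fvec A hm (x k)‖ ^ 2 ≤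
      C * ⟪Fvec A hm (x k), Binv k (Fvec A hm (x k))⟫ := by
    intro k
    have hcs := bform_cs (B k) (hsymk k) (hBpos k) (Fvec A hm (x k))
      (Binv k (Fvec A hm (x k)))
    rw [hBinv k] at hcs
    have h1 : (⟪Fvec A hm (x k), Fvec A hm (x k)⟫ : ℝ) = ‖Fvec A hm (x k)‖ ^ 2 :=
      real_inner_self_eq_norm_sq _
    have h3 : (⟪Binv k (Fvec A hm (x k)), Fvec A hm (x k)⟫ : ℝ) =
        ⟪Fvec A hm (x k), Binv k (Fvec A hm (x k))⟫ := real_inner_comm _ _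
    rw [h1, h3] at hcs
    have h2 := hBup k (Fvec A hm (x k))
    have h4 : 0 < ‖Fvec A hm (x k)‖ ^ 2 := pow_pos (norm_pos_iff.mpr (hFk k)) 2
    have h5 := hgpos k
    nlinarith [hcs, mul_le_mul_of_nonneg_right h2 h5.le, h4, h5]
  have hdb : ∀ k, ‖d k‖ ≤ ‖Fvec A hm (x k)‖ / c := by
    intro k
    have h1 := hBlow k (d k)
    have hBd : B k (d k) = -(Fvec A hm (x k)) := by rw [hd k, map_neg, hBinv]
    have h2 : (⟪d k, B k (d k)⟫ : ℝ) ≤ ‖d k‖ * ‖Fvec A hm (x k)‖ := by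
      rw [hBd, inner_neg_right]
      calc -(⟪d k, Fvec A hm (x k)⟫ : ℝ) ≤ |(⟪d k, Fvec A hm (x k)⟫ : ℝ)| := neg_le_abs _
        _ ≤ ‖d k‖ * ‖Fvec A hm (x k)‖ := abs_real_inner_le_norm _ _
    rcases eq_or_ne (d k) 0 with h | h
    · rw [h]
      simp only [norm_zero]
      positivity
    · have hdp : 0 < ‖d k‖ := norm_pos_iff.mpr h
      rw [le_div_iff₀ hc]
      nlinarith
  have key := key_aux hm A hA σ ρ hσ hρ c C hc hC0 x hxS d
    (fun k => ⟪Fvec A hm (x k), Binv k (Fvec A hm (x k))⟫)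
    hgd hgpos hgC hdb j hj hjmin hstep xb s hsm hxs
  refine ⟨key, ?_⟩
  have h6 := key
  rw [Fvec, sub_eq_zero] at h6
  exact h6
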